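/- arXiv:2310.02160 — 3 statements merged into one kernel-verified Lean document; each statement's English description precedes it below -/
import Mathlib

section
/- Let g : [0,1] → ℝ be continuous and for m ∈ ℕ define E_m := ∫_0^1 g(s)·sin(2mπs)/(2m·sin(πs)) ds (with the integrand interpreted as g(s)·(1/m)Σ_{l=1}^m cos((2l−1)πs)). Then for every α < 1, m^α · E_m → 0 as m → ∞. -/
open Real Finset MeasureTheory

lemma ker_id (θ : ℝ) (m : ℕ) :
    2 * Real.sin θ * ∑ l ∈ Finset.Icc 1 m, Real.cos ((2 * (l : ℝ) - 1) * θ)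
      = Real.sin (2 * m * θ) := by
  induction m with
  | zero => simp
  | succ n ih =>
    rw [Finset.sum_Icc_succ_top (by omega)]
    have h := Real.sin_sub_sin (2 * ((n:ℝ)+1) * θ) (2 * (n:ℝ) * θ)
    have h1 : (2 * ((n:ℝ)+1) * θ - 2 * (n:ℝ) * θ) / 2 = θ := by ring
    have h2 : (2 * ((n:ℝ)+1) * θ + 2 * (n:ℝ) * θ) / 2 = (2 * ((n:ℝ)+1) - 1) * θ := by ring
    rw [h1, h2] at h
    push_cast
    linear_combination ih - h

lemma ker_abs_le (θ : ℝ) (m : ℕ) (hθ : 0 < Real.sin θ) :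
    |∑ l ∈ Finset.Icc 1 m, Real.cos ((2 * (l : ℝ) - 1) * θ)| ≤ 1 / (2 * Real.sin θ) := by
  have h := ker_id θ m
  have h2 : (0:ℝ) < 2 * Real.sin θ := by positivity
  have key : ∑ l ∈ Finset.Icc 1 m, Real.cos ((2 * (l : ℝ) - 1) * θ)
      = Real.sin (2 * m * θ) / (2 * Real.sin θ) := by
    rw [eq_div_iff h2.ne']
    linarith [h]
  rw [key, abs_div, abs_of_pos h2]
  gcongr
  exact Real.abs_sin_le_one _

lemma ker_abs_le' (θ : ℝ) (m : ℕ) :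
    |∑ l ∈ Finset.Icc 1 m, Real.cos ((2 * (l : ℝ) - 1) * θ)| ≤ m := by
  calc |∑ l ∈ Finset.Icc 1 m, Real.cos ((2 * (l : ℝ) - 1) * θ)|
      ≤ ∑ l ∈ Finset.Icc 1 m, |Real.cos ((2 * (l : ℝ) - 1) * θ)| :=
        Finset.abs_sum_le_sum_abs _ _
    _ ≤ ∑ l ∈ Finset.Icc 1 m, 1 :=
        Finset.sum_le_sum fun i _ => Real.abs_cos_le_one _
    _ = m := by simp

lemma sin_pi_mul_ge (s : ℝ) (h0 : 0 ≤ s) (h2 : s ≤ 1/2) : 2 * s ≤ Real.sin (π * s) := by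
  have := Real.mul_le_sin (x := π * s) (by positivity)
    (by nlinarith [Real.pi_pos])
  have hπ := Real.pi_pos
  calc 2 * s = 2 / π * (π * s) := by field_simp
    _ ≤ Real.sin (π * s) := this


lemma sin_pi_mul_ge' (s : ℝ) (h0 : 1/2 ≤ s) (h2 : s ≤ 1) : 2 * (1 - s) ≤ Real.sin (π * s) := by
  have h := sin_pi_mul_ge (1 - s) (by linarith) (by linarith)
  have : Real.sin (π * (1 - s)) = Real.sin (π * s) := by
    rw [show π * (1 - s) = π - π * s by ring, Real.sin_pi_sub]
  linarith [this ▸ h]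

lemma Ebound (g : ℝ → ℝ) (hg : ContinuousOn g (Set.Icc 0 1)) (C : ℝ)
    (hC : ∀ s ∈ Set.Icc (0:ℝ) 1, |g s| ≤ C) (m : ℕ) (hm : 2 ≤ m) :
    |∫ s in (0:ℝ)..1,
        g s * ((1 / (m : ℝ)) * ∑ l ∈ Finset.Icc 1 m, Real.cos ((2 * (l : ℝ) - 1) * π * s))|
      ≤ C * (2 + Real.log m) / m := by
  have hm0 : (0:ℝ) < m := by positivity
  have hm1 : (1:ℝ) ≤ m := by exact_mod_cast Nat.one_le_of_lt hm
  have h2m : (2:ℝ) ≤ m := by exact_mod_cast hm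
  have hm2 : (1:ℝ)/m ≤ 1/2 := by
    rw [div_le_div_iff₀ hm0 (by norm_num)]
    linarith
  have hC0 : 0 ≤ C := le_trans (abs_nonneg _) (hC 0 (by norm_num))
  set K : ℝ → ℝ := fun s => (1 / (m : ℝ)) * ∑ l ∈ Finset.Icc 1 m, Real.cos ((2 * (l : ℝ) - 1) * (π * s)) with hK
  have hKeq : ∀ s : ℝ, (1 / (m : ℝ)) * ∑ l ∈ Finset.Icc 1 m, Real.cos ((2 * (l : ℝ) - 1) * π * s) = K s := by
    intro s; simp only [hK, mul_assoc]
  have hKc : Continuous K := by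
    fun_prop
  -- pointwise bounds on K
  have hK1 : ∀ s : ℝ, |K s| ≤ 1 := by
    intro s
    rw [hK, abs_mul, abs_of_pos (by positivity : (0:ℝ) < 1/(m:ℝ))]
    calc 1/(m:ℝ) * |∑ l ∈ Finset.Icc 1 m, Real.cos ((2 * (l : ℝ) - 1) * (π * s))|
        ≤ 1/(m:ℝ) * m := by gcongr; exact ker_abs_le' (π * s) m
      _ = 1 := by field_simp
  have hKin : ∀ s : ℝ, 0 < Real.sin (π * s) → |K s| ≤ 1/(m:ℝ) * (1 / (2 * Real.sin (π * s))) := by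
    intro s hs
    rw [hK, abs_mul, abs_of_pos (by positivity : (0:ℝ) < 1/(m:ℝ))]
    gcongr
    exact ker_abs_le (π * s) m hs
  set F : ℝ → ℝ := fun s => |g s * K s| with hF
  have hFint : ∀ a b : ℝ, Set.uIcc a b ⊆ Set.Icc 0 1 → IntervalIntegrable F volume a b := by
    intro a b h
    exact (((hg.mono h).mul (hKc.continuousOn)).abs).intervalIntegrable
  have hsub1 : Set.uIcc (0:ℝ) (1/m) ⊆ Set.Icc 0 1 := by
    rw [Set.uIcc_of_le (by positivity)]
    exact Set.Icc_subset_Icc le_rfl (by linarith)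
  have hsub2 : Set.uIcc (1/(m:ℝ)) (1/2) ⊆ Set.Icc 0 1 := by
    rw [Set.uIcc_of_le hm2]
    exact Set.Icc_subset_Icc (by positivity) (by norm_num)
  have hsub3 : Set.uIcc (1/2 : ℝ) (1 - 1/m) ⊆ Set.Icc 0 1 := by
    rw [Set.uIcc_of_le (by linarith)]
    exact Set.Icc_subset_Icc (by norm_num) (by linarith [show (0:ℝ) < 1/m by positivity])
  have hsub4 : Set.uIcc (1 - 1/(m:ℝ)) 1 ⊆ Set.Icc 0 1 := by
    rw [Set.uIcc_of_le (by linarith [show (0:ℝ) < 1/m by positivity])]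
    exact Set.Icc_subset_Icc (by linarith) le_rfl
  -- piece bounds
  have hgb : ∀ x ∈ Set.Icc (0:ℝ) 1, |g x * K x| ≤ C * |K x| := by
    intro x hx
    rw [abs_mul]
    exact mul_le_mul_of_nonneg_right (hC x hx) (abs_nonneg _)
  have P1 : ∫ s in (0:ℝ)..(1/m), F s ≤ C / m := by
    have : ∫ s in (0:ℝ)..(1/m), F s ≤ ∫ s in (0:ℝ)..(1/m), C := by
      apply intervalIntegral.integral_mono_on (by positivity) (hFint _ _ hsub1)
        intervalIntegrable_const
      intro x hx
      calc F x ≤ C * |K x| := hgb x (hsub1 (by rwa [Set.uIcc_of_le (by positivity)]))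
        _ ≤ C * 1 := by gcongr; exact hK1 x
        _ = C := mul_one C
    refine this.trans ?_
    rw [intervalIntegral.integral_const, smul_eq_mul, sub_zero, one_div, inv_mul_eq_div]
  have P4 : ∫ s in (1 - 1/(m:ℝ))..1, F s ≤ C / m := by
    have : ∫ s in (1 - 1/(m:ℝ))..1, F s ≤ ∫ s in (1 - 1/(m:ℝ))..1, C := by
      apply intervalIntegral.integral_mono_on (by linarith [show (0:ℝ) < 1/m by positivity])
        (hFint _ _ hsub4) intervalIntegrable_const
      intro x hx
      calc F x ≤ C * |K x| := hgb x (hsub4 (by rwa [Set.uIcc_of_le (by linarith [show (0:ℝ) < 1/m by positivity])]))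
        _ ≤ C * 1 := by gcongr; exact hK1 x
        _ = C := mul_one C
    refine this.trans ?_
    rw [intervalIntegral.integral_const, show (1:ℝ) - (1 - 1/m) = 1/m by ring,
      smul_eq_mul, one_div, inv_mul_eq_div]
  have P2 : ∫ s in (1/(m:ℝ))..(1/2), F s ≤ C/(4*m) * Real.log ((m:ℝ)/2) := by
    have hb : ∫ s in (1/(m:ℝ))..(1/2), F s ≤ ∫ s in (1/(m:ℝ))..(1/2), C/(4*m) * (1/s) := by
      apply intervalIntegral.integral_mono_on hm2 (hFint _ _ hsub2)
      · apply ContinuousOn.intervalIntegrable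
        apply ContinuousOn.mul continuousOn_const
        apply ContinuousOn.div continuousOn_const continuousOn_id
        intro x hx
        rw [Set.uIcc_of_le hm2] at hx
        have : (0:ℝ) < 1/m := by positivity
        exact ne_of_gt (lt_of_lt_of_le this hx.1)
      intro x hx
      have hx1 : (1:ℝ)/m ≤ x := hx.1
      have hx2 : x ≤ 1/2 := hx.2
      have hx0 : 0 < x := lt_of_lt_of_le (by positivity) hx1
      have hsin : 2 * x ≤ Real.sin (π * x) := sin_pi_mul_ge x hx0.le hx2
      have hsin0 : 0 < Real.sin (π * x) := lt_of_lt_of_le (by linarith) hsin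
      calc F x ≤ C * |K x| := hgb x (hsub2 (by rwa [Set.uIcc_of_le hm2]))
        _ ≤ C * (1/(m:ℝ) * (1 / (2 * Real.sin (π * x)))) := by
            gcongr <;> first | exact hKin x hsin0 | exact Or.inl trivial
        _ ≤ C * (1/(m:ℝ) * (1 / (2 * (2 * x)))) := by
            apply mul_le_mul_of_nonneg_left _ hC0
            apply mul_le_mul_of_nonneg_left _ (by positivity)
            apply one_div_le_one_div_of_le (by linarith) (by linarith)
        _ = C/(4*m) * (1/x) := by field_simp; ring
    refine hb.trans ?_
    rw [intervalIntegral.integral_const_mul]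
    rw [integral_one_div (by rw [Set.uIcc_of_le hm2]; intro h; exact absurd h.1 (by push_neg; positivity))]
    rw [show (1/2 : ℝ) / (1/(m:ℝ)) = (m:ℝ)/2 by field_simp]
  have P3 : ∫ s in (1/2 : ℝ)..(1 - 1/m), F s ≤ C/(4*m) * Real.log ((m:ℝ)/2) := by
    have hb : ∫ s in (1/2 : ℝ)..(1 - 1/m), F s ≤ ∫ s in (1/2 : ℝ)..(1 - 1/m), C/(4*m) * (1/(1-s)) := by
      apply intervalIntegral.integral_mono_on (by linarith) (hFint _ _ hsub3)
      · apply ContinuousOn.intervalIntegrable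
        apply ContinuousOn.mul continuousOn_const
        apply ContinuousOn.div continuousOn_const
        · exact (continuous_const.sub continuous_id').continuousOn
        intro x hx
        rw [Set.uIcc_of_le (by linarith)] at hx
        have h1 : x ≤ 1 - 1/m := hx.2
        have : (0:ℝ) < 1/m := by positivity
        intro h; rw [sub_eq_zero] at h; rw [← h] at h1; linarith
      intro x hx
      have hx1 : (1/2:ℝ) ≤ x := hx.1
      have hx2 : x ≤ 1 - 1/m := hx.2
      have hmm : (0:ℝ) < 1/m := by positivity
      have hxx : (1:ℝ)/m ≤ 1 - x := by linarith
      have hx0 : 0 < 1 - x := lt_of_lt_of_le hmm hxx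
      have hsin : 2 * (1 - x) ≤ Real.sin (π * x) := sin_pi_mul_ge' x hx1 (by linarith)
      have hsin0 : 0 < Real.sin (π * x) := lt_of_lt_of_le (by linarith) hsin
      calc F x ≤ C * |K x| := hgb x (hsub3 (by rwa [Set.uIcc_of_le (by linarith)]))
        _ ≤ C * (1/(m:ℝ) * (1 / (2 * Real.sin (π * x)))) := by
            gcongr <;> first | exact hKin x hsin0 | exact Or.inl trivial
        _ ≤ C * (1/(m:ℝ) * (1 / (2 * (2 * (1 - x))))) := by
            apply mul_le_mul_of_nonneg_left _ hC0
            apply mul_le_mul_of_nonneg_left _ (by positivity)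
            apply one_div_le_one_div_of_le (by linarith) (by linarith)
        _ = C/(4*m) * (1/(1-x)) := by field_simp; ring
    refine hb.trans ?_
    rw [intervalIntegral.integral_const_mul]
    have hcv : ∫ s in (1/2 : ℝ)..(1 - 1/m), 1/(1-s) = ∫ x in (1/(m:ℝ))..(1/2), 1/x := by
      have := intervalIntegral.integral_comp_sub_left (a := (1/2 : ℝ)) (b := 1 - 1/m)
        (fun x => 1/x) 1
      rw [this]
      norm_num
    rw [hcv, integral_one_div (by rw [Set.uIcc_of_le hm2]; intro h; exact absurd h.1 (by push_neg; positivity))]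
    rw [show (1/2 : ℝ) / (1/(m:ℝ)) = (m:ℝ)/2 by field_simp]
  -- assemble
  have hsplit : ∫ s in (0:ℝ)..1, F s
      = (∫ s in (0:ℝ)..(1/m), F s) + (∫ s in (1/(m:ℝ))..(1/2), F s)
        + (∫ s in (1/2:ℝ)..(1 - 1/m), F s) + (∫ s in (1 - 1/(m:ℝ))..1, F s) := by
    rw [intervalIntegral.integral_add_adjacent_intervals (hFint _ _ hsub1) (hFint _ _ hsub2)]
    rw [intervalIntegral.integral_add_adjacent_intervals
      ((hFint _ _ hsub1).trans (hFint _ _ hsub2)) (hFint _ _ hsub3)]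
    rw [intervalIntegral.integral_add_adjacent_intervals
      (((hFint _ _ hsub1).trans (hFint _ _ hsub2)).trans (hFint _ _ hsub3)) (hFint _ _ hsub4)]
  have habs : |∫ s in (0:ℝ)..1,
      g s * ((1 / (m : ℝ)) * ∑ l ∈ Finset.Icc 1 m, Real.cos ((2 * (l : ℝ) - 1) * π * s))|
      ≤ ∫ s in (0:ℝ)..1, F s := by
    have : (∫ s in (0:ℝ)..1,
        g s * ((1 / (m : ℝ)) * ∑ l ∈ Finset.Icc 1 m, Real.cos ((2 * (l : ℝ) - 1) * π * s)))
        = ∫ s in (0:ℝ)..1, g s * K s := by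
      congr 1; funext s; rw [hKeq]
    rw [this]
    exact intervalIntegral.abs_integral_le_integral_abs zero_le_one
  have hlog : Real.log ((m:ℝ)/2) ≤ Real.log m :=
    Real.log_le_log (by positivity) (by linarith)
  have hlog0 : 0 ≤ Real.log m := Real.log_nonneg hm1
  calc |∫ s in (0:ℝ)..1,
      g s * ((1 / (m : ℝ)) * ∑ l ∈ Finset.Icc 1 m, Real.cos ((2 * (l : ℝ) - 1) * π * s))|
      ≤ ∫ s in (0:ℝ)..1, F s := habs
    _ = (∫ s in (0:ℝ)..(1/m), F s) + (∫ s in (1/(m:ℝ))..(1/2), F s)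
        + (∫ s in (1/2:ℝ)..(1 - 1/m), F s) + (∫ s in (1 - 1/(m:ℝ))..1, F s) := hsplit
    _ ≤ C/m + C/(4*m) * Real.log ((m:ℝ)/2) + C/(4*m) * Real.log ((m:ℝ)/2) + C/m := by
        gcongr
    _ ≤ C/m + C/(4*m) * Real.log m + C/(4*m) * Real.log m + C/m := by gcongr
    _ ≤ C * (2 + Real.log m) / m := by
        have hid : C * (2 + Real.log m)/m
            - (C/m + C/(4*m)*Real.log m + C/(4*m)*Real.log m + C/m)
            = (C * Real.log m)/(2*m) := by
          field_simp
          ring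
        have hpos : (0:ℝ) ≤ (C * Real.log m)/(2*m) :=
          div_nonneg (mul_nonneg hC0 hlog0) (by positivity)
        linarith

theorem stmt4 (g : ℝ → ℝ) (hg : ContinuousOn g (Set.Icc 0 1)) (α : ℝ) (hα : α < 1) :
    Filter.Tendsto
      (fun m : ℕ => (m : ℝ) ^ α *
        ∫ s in (0:ℝ)..1,
          g s * ((1 / (m : ℝ)) * ∑ l ∈ Finset.Icc 1 m, Real.cos ((2 * (l : ℝ) - 1) * π * s)))
      Filter.atTop (nhds 0) := by
  obtain ⟨C, hC⟩ := isCompact_Icc.exists_bound_of_continuousOn hg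
  have hC' : ∀ s ∈ Set.Icc (0:ℝ) 1, |g s| ≤ C := fun s hs => hC s hs
  have hC0 : 0 ≤ C := le_trans (abs_nonneg _) (hC' 0 (by norm_num))
  -- the limit of the bounding sequence
  have h1 : Filter.Tendsto (fun x : ℝ => x ^ (α - 1)) Filter.atTop (nhds 0) := by
    have := tendsto_rpow_neg_atTop (y := 1 - α) (by linarith)
    simpa [neg_sub] using this
  have h2 : Filter.Tendsto (fun x : ℝ => Real.log x * x ^ (α - 1)) Filter.atTop (nhds 0) := by
    have ho := isLittleO_log_rpow_atTop (show 0 < 1 - α by linarith)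
    have ht := ho.tendsto_div_nhds_zero
    apply ht.congr'
    filter_upwards [Filter.eventually_ge_atTop (1:ℝ)] with x hx
    have hx0 : (0:ℝ) < x := lt_of_lt_of_le one_pos hx
    rw [div_eq_mul_inv, ← Real.rpow_neg hx0.le, neg_sub]
  have hR : Filter.Tendsto (fun x : ℝ => C * (2 * x ^ (α - 1) + Real.log x * x ^ (α - 1)))
      Filter.atTop (nhds 0) := by
    have := ((h1.const_mul 2).add h2).const_mul C
    simpa using this
  have hN : Filter.Tendsto
      (fun n : ℕ => C * (2 * (n:ℝ) ^ (α - 1) + Real.log n * (n:ℝ) ^ (α - 1)))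
      Filter.atTop (nhds 0) := hR.comp tendsto_natCast_atTop_atTop
  apply squeeze_zero_norm'
    (a := fun n : ℕ => C * (2 * (n:ℝ) ^ (α - 1) + Real.log n * (n:ℝ) ^ (α - 1)))
  · filter_upwards [Filter.eventually_ge_atTop 2] with m hm
    have hm0 : (0:ℝ) < m := by positivity
    have hE := Ebound g hg C hC' m hm
    have hrw : (m:ℝ) ^ (α - 1) = (m:ℝ) ^ α / m := Real.rpow_sub_one (ne_of_gt hm0) α
    rw [Real.norm_eq_abs, abs_mul, abs_of_nonneg (Real.rpow_nonneg hm0.le α)]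
    calc (m:ℝ) ^ α * |∫ s in (0:ℝ)..1,
          g s * ((1 / (m : ℝ)) * ∑ l ∈ Finset.Icc 1 m, Real.cos ((2 * (l : ℝ) - 1) * π * s))|
        ≤ (m:ℝ) ^ α * (C * (2 + Real.log m) / m) := by
          gcongr
      _ = C * (2 * (m:ℝ) ^ (α - 1) + Real.log m * (m:ℝ) ^ (α - 1)) := by
          rw [hrw]; field_simp
  · exact hN
end

section
/- Let n ∈ ℕ, m = 2n, and define 𝒟(u,v) := (2/m) Σ_{l=1}^m cos((l−1/2)πu)·cos((l−1/2)πv). Then (1/n) Σ_{j=1}^n 𝒟((j−1)/n, j/n) = 0. -/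
open Real Finset

/-- Telescoping sum: if `sin (θ/2) ≠ 0` and `sin (m θ) = 0` then
`∑_{l=1}^m cos((l-1/2)θ) = 0`. -/
lemma sum_cos_half_zero (m : ℕ) (θ : ℝ) (h : Real.sin (θ / 2) ≠ 0)
    (h2 : Real.sin ((m : ℝ) * θ) = 0) :
    ∑ l ∈ Finset.Icc 1 m, Real.cos (((l : ℝ) - 1 / 2) * θ) = 0 := by
  have key : 2 * Real.sin (θ / 2) * ∑ l ∈ Finset.Icc 1 m, Real.cos (((l : ℝ) - 1 / 2) * θ)
      = Real.sin ((m : ℝ) * θ) - Real.sin ((0 : ℝ) * θ) := by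
    rw [Finset.mul_sum, ← Finset.Ico_add_one_right_eq_Icc, Finset.sum_Ico_eq_sum_range]
    simp only [Nat.add_sub_cancel, Nat.succ_sub_one]
    have := Finset.sum_range_sub (fun i : ℕ => Real.sin ((i : ℝ) * θ)) m
    push_cast at this ⊢
    rw [← this]
    apply Finset.sum_congr rfl
    intro i _
    rw [Real.sin_sub_sin]
    push_cast
    ring_nf
  have h2' : Real.sin ((m : ℝ) * θ) - Real.sin ((0 : ℝ) * θ) = 0 := by
    simp [h2]
  rw [h2'] at key
  have h2s : (2 : ℝ) * Real.sin (θ / 2) ≠ 0 := by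
    simp [h]
  exact (mul_eq_zero.mp key).resolve_left h2s

/-- The SIML kernel `𝒟_m(u,v) = (2/m) Σ_{l=1}^m cos((l−1/2)πu) cos((l−1/2)πv)`. -/
noncomputable def Dker (m : ℕ) (u v : ℝ) : ℝ :=
  (2 / (m : ℝ)) * ∑ l ∈ Finset.Icc 1 m,
    Real.cos (((l : ℝ) - 1 / 2) * π * u) * Real.cos (((l : ℝ) - 1 / 2) * π * v)

theorem stmt8 (n : ℕ) (hn : 0 < n) :
    (1 / (n : ℝ)) * ∑ j ∈ Finset.Icc 1 n,
      Dker (2 * n) (((j : ℝ) - 1) / n) ((j : ℝ) / n) = 0 := by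
  have hn' : (0 : ℝ) < n := by exact_mod_cast hn
  have hterm : ∀ j ∈ Finset.Icc 1 n, Dker (2 * n) (((j : ℝ) - 1) / n) ((j : ℝ) / n) = 0 := by
    intro j hj
    have hj1 : 1 ≤ j := (Finset.mem_Icc.mp hj).1
    unfold Dker
    rw [mul_eq_zero]
    right
    -- rewrite each product of cosines
    have hprod : ∀ l : ℕ,
        Real.cos (((l : ℝ) - 1 / 2) * π * (((j : ℝ) - 1) / n)) *
          Real.cos (((l : ℝ) - 1 / 2) * π * ((j : ℝ) / n))
        = (Real.cos (((l : ℝ) - 1 / 2) * (π / n))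
            + Real.cos (((l : ℝ) - 1 / 2) * ((2 * (j : ℝ) - 1) * π / n))) / 2 := by
      intro l
      have h2c := Real.two_mul_cos_mul_cos (((l : ℝ) - 1 / 2) * π * (((j : ℝ) - 1) / n))
        (((l : ℝ) - 1 / 2) * π * ((j : ℝ) / n))
      have e1 : ((l : ℝ) - 1 / 2) * π * (((j : ℝ) - 1) / n) - ((l : ℝ) - 1 / 2) * π * ((j : ℝ) / n)
          = -(((l : ℝ) - 1 / 2) * (π / n)) := by field_simp; ring
      have e2 : ((l : ℝ) - 1 / 2) * π * (((j : ℝ) - 1) / n) + ((l : ℝ) - 1 / 2) * π * ((j : ℝ) / n)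
          = ((l : ℝ) - 1 / 2) * ((2 * (j : ℝ) - 1) * π / n) := by field_simp; ring
      rw [e1, e2, Real.cos_neg] at h2c
      linarith
    calc ∑ l ∈ Finset.Icc 1 (2 * n),
          Real.cos (((l : ℝ) - 1 / 2) * π * (((j : ℝ) - 1) / n)) *
            Real.cos (((l : ℝ) - 1 / 2) * π * ((j : ℝ) / n))
        = (∑ l ∈ Finset.Icc 1 (2 * n), Real.cos (((l : ℝ) - 1 / 2) * (π / n))
            + ∑ l ∈ Finset.Icc 1 (2 * n),
              Real.cos (((l : ℝ) - 1 / 2) * ((2 * (j : ℝ) - 1) * π / n))) / 2 := by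
          rw [← Finset.sum_add_distrib]
          rw [eq_div_iff (by norm_num : (2:ℝ) ≠ 0), Finset.sum_mul]
          refine Finset.sum_congr rfl fun l _ => ?_
          rw [hprod l]
          ring
      _ = 0 := by
          rw [sum_cos_half_zero, sum_cos_half_zero]
          · norm_num
          · -- sin((2j-1)π/(2n)) ≠ 0
            intro hsin
            have := (Real.sin_eq_zero_iff).mp hsin
            obtain ⟨k, hk⟩ := this
            have hpi : π ≠ 0 := Real.pi_ne_zero
            have hr : (k : ℝ) * (2 * n) = 2 * (j : ℝ) - 1 := by
              have hne : (n : ℝ) ≠ 0 := ne_of_gt hn'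
              field_simp at hk
              have h2 : ((k : ℝ) * (2 * n)) * π = (2 * (j : ℝ) - 1) * π := by
                rw [← hk]; ring
              exact mul_right_cancel₀ hpi h2
            have hz : (k : ℤ) * (2 * n) = 2 * (j : ℤ) - 1 := by exact_mod_cast hr
            have hev : (2 : ℤ) ∣ k * (2 * n) := ⟨k * n, by ring⟩
            rw [hz] at hev
            omega
          · -- sin(2n * ((2j-1)π/n)) = 0
            have : ((2 * n : ℕ) : ℝ) * ((2 * (j : ℝ) - 1) * π / n) = ((2 * (2 * (j : ℤ) - 1) : ℤ) : ℝ) * π := by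
              have hne : (n : ℝ) ≠ 0 := ne_of_gt hn'
              push_cast
              field_simp
            rw [this]
            exact Real.sin_int_mul_pi _
          · -- sin(π/(2n)) ≠ 0
            have h1 : (0 : ℝ) < π / n / 2 := by positivity
            have h2 : π / n / 2 < π := by
              rw [div_lt_iff₀ (by norm_num : (0:ℝ) < 2)] at *
              have : π / n ≤ π := by
                rw [div_le_iff₀ hn']
                nlinarith [Real.pi_pos, (by exact_mod_cast hn : (1:ℝ) ≤ n)]
              nlinarith [Real.pi_pos]
            exact ne_of_gt (Real.sin_pos_of_pos_of_lt_pi h1 h2)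
          · -- sin(2n * (π/n)) = 0
            have : ((2 * n : ℕ) : ℝ) * (π / n) = ((2 : ℤ) : ℝ) * π := by
              have hne : (n : ℝ) ≠ 0 := ne_of_gt hn'
              push_cast
              field_simp
            rw [this]
            exact Real.sin_int_mul_pi _
  rw [Finset.sum_congr rfl hterm]
  simp
end

section
/- Let n be a positive integer, m a positive integer with 2m/(2n+1) = a ∈ ℕ, and define 𝒟_m(u,v) := (2/m) Σ_{l=1}^m cos((l−1/2)πu)·cos((l−1/2)πv). Then for all integers 1 ≤ k, k' ≤ n, 𝒟_m((2k−1)/(2n+1), (2k'−1)/(2n+1)) equals 1 if k = k' and 0 if k ≠ k'. -/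
open Real Finset


lemma sumA (θ : ℝ) (m : ℕ) :
    2 * Real.sin (θ/2) * ∑ l ∈ Finset.Icc 1 m, Real.cos (((l:ℝ) - 1/2) * θ)
      = Real.sin (m * θ) := by
  induction m with
  | zero => simp
  | succ m ih =>
    rw [Finset.sum_Icc_succ_top (by omega : 1 ≤ m+1)]
    have h : Real.sin ((m+1:ℝ)*θ) - Real.sin ((m:ℝ)*θ)
        = 2 * Real.sin (θ/2) * Real.cos ((((m+1:ℕ):ℝ) - 1/2)*θ) := by
      rw [Real.sin_sub_sin]; push_cast; ring_nf
    push_cast at h ⊢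
    nlinarith [ih, h]

lemma sumZero (θ : ℝ) (m : ℕ) (h1 : Real.sin (m * θ) = 0) (h2 : Real.sin (θ/2) ≠ 0) :
    ∑ l ∈ Finset.Icc 1 m, Real.cos (((l:ℝ) - 1/2) * θ) = 0 := by
  have := sumA θ m
  rw [h1] at this
  have h3 : (2 : ℝ) * Real.sin (θ/2) ≠ 0 := by simp [h2]
  exact (mul_eq_zero.mp this).resolve_left h3

lemma sin_pi_mul_ne (x : ℝ) (h1 : 0 < x) (h2 : x < 1) : Real.sin (π * x) ≠ 0 :=
  ne_of_gt (Real.sin_pos_of_pos_of_lt_pi (by positivity)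
    (by nlinarith [Real.pi_pos]))


theorem stmt9 (n m a : ℕ) (hn : 0 < n) (hm : 0 < m) (ha : 2 * m = a * (2 * n + 1))
    (k k' : ℕ) (hk : 1 ≤ k) (hk2 : k ≤ n) (hk' : 1 ≤ k') (hk'2 : k' ≤ n) :
    Dker m ((2 * (k : ℝ) - 1) / (2 * n + 1)) ((2 * (k' : ℝ) - 1) / (2 * n + 1))
      = if k = k' then 1 else 0 := by
  have haR : (2 : ℝ) * m = a * (2 * n + 1) := by exact_mod_cast congrArg (Nat.cast : ℕ → ℝ) ha
  have hN : (2 * (n:ℝ) + 1) ≠ 0 := by positivity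
  set u : ℝ := (2 * (k : ℝ) - 1) / (2 * n + 1) with hu
  set v : ℝ := (2 * (k' : ℝ) - 1) / (2 * n + 1) with hv
  have hmR : (m : ℝ) ≠ 0 := Nat.cast_ne_zero.mpr hm.ne'
  -- split
  have hsplit : ∀ l ∈ Finset.Icc 1 m,
      Real.cos (((l:ℝ) - 1/2) * π * u) * Real.cos (((l:ℝ) - 1/2) * π * v)
        = (Real.cos (((l:ℝ) - 1/2) * (π * (u - v)))
           + Real.cos (((l:ℝ) - 1/2) * (π * (u + v)))) / 2 := by
    intro l _
    rw [show ((l:ℝ) - 1/2) * (π * (u - v)) = ((l:ℝ)-1/2)*π*u - ((l:ℝ)-1/2)*π*v by ring,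
        show ((l:ℝ) - 1/2) * (π * (u + v)) = ((l:ℝ)-1/2)*π*u + ((l:ℝ)-1/2)*π*v by ring,
        Real.cos_sub, Real.cos_add]
    ring
  -- sum term vanishes
  have hsum2 : ∑ l ∈ Finset.Icc 1 m, Real.cos (((l:ℝ) - 1/2) * (π * (u + v))) = 0 := by
    apply sumZero
    · have harg : (m : ℝ) * (π * (u + v)) = ((a * (k + k' - 1) : ℕ) : ℝ) * π := by
        push_cast [Nat.cast_sub (by omega : 1 ≤ k + k')]
        rw [hu, hv]
        field_simp
        linear_combination ((k:ℝ)+k'-1)*haR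
      rw [harg]; exact Real.sin_nat_mul_pi _
    · have : (π * (u + v)) / 2 = π * (((k:ℝ) + k' - 1) / (2 * n + 1)) := by
        rw [hu, hv]; field_simp; ring
      rw [this]
      apply sin_pi_mul_ne
      · have : (1:ℝ) ≤ (k:ℝ) + k' - 1 := by
          have : (1:ℝ) ≤ (k:ℝ) := by exact_mod_cast hk
          have : (1:ℝ) ≤ (k':ℝ) := by exact_mod_cast hk'
          linarith [show (1:ℝ) ≤ (k:ℝ) from by exact_mod_cast hk]
        positivity
      · rw [div_lt_one (by positivity)]
        have h1 : (k:ℝ) ≤ n := by exact_mod_cast hk2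
        have h2 : (k':ℝ) ≤ n := by exact_mod_cast hk'2
        linarith
  by_cases hkk : k = k'
  · subst hkk
    simp only [if_pos rfl]
    have hsum1 : ∑ l ∈ Finset.Icc 1 m, Real.cos (((l:ℝ) - 1/2) * (π * (u - v))) = (m : ℝ) := by
      have : u - v = 0 := by rw [hu, hv]; ring
      rw [this]
      simp [Nat.card_Icc]
    rw [Dker, Finset.sum_congr rfl hsplit, ← Finset.sum_div, Finset.sum_add_distrib,
      hsum1, hsum2]
    field_simp
    simp
  · simp only [if_neg hkk]
    have hsum1 : ∑ l ∈ Finset.Icc 1 m, Real.cos (((l:ℝ) - 1/2) * (π * (u - v))) = 0 := by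
      apply sumZero
      · have harg : (m : ℝ) * (π * (u - v)) = ((a * (k:ℤ) - a * k') : ℤ) * π := by
          push_cast [Int.cast_natCast]
          rw [hu, hv]
          field_simp
          linear_combination ((k:ℝ)-k')*haR
        rw [harg]; exact Real.sin_int_mul_pi _
      · have harg : (π * (u - v)) / 2 = π * (((k:ℝ) - k') / (2 * n + 1)) := by
          rw [hu, hv]; field_simp; ring
        rw [harg]
        have hR : (k:ℝ) ≠ (k':ℝ) := by exact_mod_cast fun h => hkk (Nat.cast_injective h)
        rcases hR.lt_or_gt with h | h
        · rw [show ((k:ℝ) - k') / (2 * n + 1) = -(((k':ℝ) - k) / (2 * n + 1)) by ring,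
            mul_neg, Real.sin_neg, neg_ne_zero]
          apply sin_pi_mul_ne
          · have := sub_pos.mpr h; positivity
          · rw [div_lt_one (by positivity)]
            have h1 : (k':ℝ) ≤ n := by exact_mod_cast hk'2
            have h0 : (1:ℝ) ≤ (k:ℝ) := by exact_mod_cast hk
            linarith
        · apply sin_pi_mul_ne
          · have := sub_pos.mpr h; positivity
          · rw [div_lt_one (by positivity)]
            have h1 : (k:ℝ) ≤ n := by exact_mod_cast hk2
            have h0 : (1:ℝ) ≤ (k':ℝ) := by exact_mod_cast hk'
            linarith
    rw [Dker, Finset.sum_congr rfl hsplit, ← Finset.sum_div, Finset.sum_add_distrib,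
      hsum1, hsum2]
    simp
end
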